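/- Let U₁,…,Uₙ be i.i.d. uniform on {0,1,…,N} with N = n·r, r ≥ 1, and let q > 2, p > 1 with 1/p + 1/q = 1. Then ∑_{u∈S} ∏ᵢ (max{uᵢ, 1/(2π)})^{−1/2} ≤ exp{(n/p)·Ψ(r)} · [(2π)^{q/2} + ζ(q/2)]^{n/q}, where S = {u ∈ {0,…,N}ⁿ : ∑ᵢ uᵢ = N} and Ψ(t) = (1+t)log(1+t) − t·log t. -/

import Mathlib

open Real

/-- `Ψ(t) = (1+t)log(1+t) − t·log t`. -/
noncomputable def Psi (t : ℝ) : ℝ := (1 + t) * Real.log (1 + t) - t * Real.log t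

/-- Riemann's zeta function for real arguments, `ζ(s) = ∑_{j=1}^∞ j^{-s}`. -/
noncomputable def zetaReal (s : ℝ) : ℝ := ∑' j : ℕ, ((j : ℝ) + 1) ^ (-s)

/-- The sum over the antidiagonal of a product of nonnegative values is bounded by
the `n`-th power of the one-dimensional sum over `{0,…,N}`. -/
lemma sum_antidiagonalTuple_prod_le (n N : ℕ) (g : ℕ → ℝ) (hg : ∀ j, 0 ≤ g j) :
    ∑ u ∈ Finset.Nat.antidiagonalTuple n N, ∏ i, g (u i)
      ≤ (∑ j ∈ Finset.range (N + 1), g j) ^ n := by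
  have hsub : Finset.Nat.antidiagonalTuple n N ⊆
      Fintype.piFinset (fun _ : Fin n => Finset.range (N + 1)) := by
    intro u hu
    rw [Finset.Nat.mem_antidiagonalTuple] at hu
    rw [Fintype.mem_piFinset]
    intro i
    rw [Finset.mem_range, Nat.lt_succ_iff, ← hu]
    exact Finset.single_le_sum (fun j _ => Nat.zero_le _) (Finset.mem_univ i)
  calc ∑ u ∈ Finset.Nat.antidiagonalTuple n N, ∏ i, g (u i)
      ≤ ∑ u ∈ Fintype.piFinset (fun _ : Fin n => Finset.range (N + 1)), ∏ i, g (u i) :=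
        Finset.sum_le_sum_of_subset_of_nonneg hsub
          (fun u _ _ => Finset.prod_nonneg fun i _ => hg _)
    _ = ∏ _i : Fin n, ∑ j ∈ Finset.range (N + 1), g j :=
        (Finset.prod_univ_sum _ _).symm
    _ = (∑ j ∈ Finset.range (N + 1), g j) ^ n := by
        rw [Finset.prod_const, Finset.card_univ, Fintype.card_fin]

theorem stmt_15 (n N : ℕ) (hn : 1 ≤ n) (r : ℝ) (hr : 1 ≤ r) (hN : (N : ℝ) = n * r)
    (p q : ℝ) (hq : 2 < q) (hp : 1 < p) (hpq : 1/p + 1/q = 1) :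
    ∑ u ∈ Finset.Nat.antidiagonalTuple n N,
        ∏ i, (max (u i : ℝ) (1 / (2 * π))) ^ (-(1:ℝ)/2)
      ≤ Real.exp ((n / p) * Psi r) * ((2 * π) ^ (q/2) + zetaReal (q/2)) ^ ((n : ℝ)/q) := by
  have hπ : 0 < π := Real.pi_pos
  have h2π : (1:ℝ) < 2 * π := by nlinarith [Real.pi_gt_three]
  set c : ℝ := 1 / (2 * π) with hc_def
  have hc0 : 0 < c := by positivity
  have hc1 : c < 1 := by
    rw [hc_def, div_lt_one (by linarith)]; linarith
  set f : ℕ → ℝ := fun j => (max (j : ℝ) c) ^ (-(1:ℝ)/2) with hf_def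
  have hmax : ∀ j : ℕ, 0 < max (j : ℝ) c := fun j => lt_max_of_lt_right hc0
  have hfpos : ∀ j, 0 < f j := fun j => Real.rpow_pos_of_pos (hmax j) _
  have hp0 : 0 < p := by linarith
  have hq0 : 0 < q := by linarith
  have hr0 : 0 < r := by linarith
  have h1r : (0:ℝ) < 1 + r := by linarith
  set S := Finset.Nat.antidiagonalTuple n N with hS_def
  set Z : ℝ := (2 * π) ^ (q/2) + zetaReal (q/2) with hZ_def
  -- Z nonneg
  have hzeta0 : 0 ≤ zetaReal (q/2) :=
    tsum_nonneg fun j => Real.rpow_nonneg (by positivity) _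
  have hZ0 : 0 ≤ Z := by
    have : (0:ℝ) ≤ (2 * π) ^ (q/2) := Real.rpow_nonneg (by positivity) _
    rw [hZ_def]; linarith
  -- Hölder
  have hconj : p.HolderConjugate q := Real.holderConjugate_iff.mpr ⟨hp, by rw [← one_div, ← one_div]; exact hpq⟩
  have holder := Real.inner_le_Lp_mul_Lq S (fun _ => (1:ℝ)) (fun u => ∏ i, f (u i)) hconj
  simp only [one_mul, abs_one, Real.one_rpow] at holder
  have habsF : ∀ u : Fin n → ℕ, |∏ i, f (u i)| = ∏ i, f (u i) := fun u =>
    abs_of_nonneg (Finset.prod_nonneg fun i _ => (hfpos _).le)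
  simp only [habsF] at holder
  -- Bound 1: cardinality
  set x : ℝ := r / (1 + r) with hx_def
  have hx0 : 0 < x := by positivity
  have hx1 : x < 1 := by rw [hx_def, div_lt_one h1r]; linarith
  have hcard : (S.card : ℝ) * x ^ N ≤ (1 + r) ^ n := by
    have hgb := sum_antidiagonalTuple_prod_le n N (fun j => x ^ j)
      (fun j => pow_nonneg hx0.le j)
    have e1 : ∑ u ∈ S, ∏ i, x ^ (u i) = ∑ u ∈ S, x ^ N := by
      refine Finset.sum_congr rfl fun u hu => ?_
      rw [Finset.prod_pow_eq_pow_sum, (Finset.Nat.mem_antidiagonalTuple.mp hu)]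
    have hgeom : ∑ j ∈ Finset.range (N + 1), x ^ j ≤ 1 + r := by
      rw [geom_sum_eq hx1.ne (N + 1)]
      have h1x : (1 + r) * (x - 1) = -1 := by
        rw [hx_def]; field_simp; ring
      rw [div_le_iff_of_neg (by linarith)]
      have hxp : 0 ≤ x ^ (N + 1) := pow_nonneg hx0.le _
      linarith
    calc (S.card : ℝ) * x ^ N = ∑ u ∈ S, x ^ N := by
          rw [Finset.sum_const, nsmul_eq_mul]
      _ = ∑ u ∈ S, ∏ i, x ^ (u i) := e1.symm
      _ ≤ (∑ j ∈ Finset.range (N + 1), x ^ j) ^ n := hgb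
      _ ≤ (1 + r) ^ n := pow_le_pow_left₀ (Finset.sum_nonneg fun j _ =>
            pow_nonneg hx0.le j) hgeom n
  have hexp : Real.exp ((n : ℝ) * Psi r) = (1 + r) ^ n * ((1 + r) / r) ^ N := by
    have e2 : (n : ℝ) * Psi r = (n : ℝ) * Real.log (1 + r) + (N : ℝ) * Real.log ((1 + r) / r) := by
      rw [Psi, Real.log_div h1r.ne' hr0.ne', hN]; ring
    rw [e2, Real.exp_add, Real.exp_nat_mul, Real.exp_nat_mul,
      Real.exp_log h1r, Real.exp_log (by positivity)]
  have hcard' : (S.card : ℝ) ≤ Real.exp ((n : ℝ) * Psi r) := by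
    rw [hexp]
    have hxN : 0 < x ^ N := pow_pos hx0 N
    rw [← le_div_iff₀ hxN] at hcard
    refine hcard.trans (le_of_eq ?_)
    rw [div_eq_mul_inv, ← inv_pow]
    congr 2
    rw [hx_def, ← one_div, one_div_div]
  -- Bound 2: the q-th moment
  have hq2 : 1 < q / 2 := by linarith
  have hfq : ∀ u : Fin n → ℕ, (∏ i, f (u i)) ^ q = ∏ i, f (u i) ^ q := fun u =>
    (Real.finset_prod_rpow _ _ (fun i _ => (hfpos _).le) q).symm
  have hmom : ∑ u ∈ S, (∏ i, f (u i)) ^ q ≤ Z ^ n := by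
    have hgb := sum_antidiagonalTuple_prod_le n N (fun j => f j ^ q)
      (fun j => Real.rpow_nonneg (hfpos j).le q)
    have hT0 : 0 ≤ ∑ j ∈ Finset.range (N + 1), f j ^ q :=
      Finset.sum_nonneg fun j _ => Real.rpow_nonneg (hfpos j).le q
    have hfj : ∀ j : ℕ, f j ^ q = (max (j : ℝ) c) ^ (-(q/2)) := by
      intro j
      rw [hf_def]
      rw [← Real.rpow_mul (hmax j).le]
      norm_num
      ring_nf
    have hTZ : ∑ j ∈ Finset.range (N + 1), f j ^ q ≤ Z := by
      rw [Finset.sum_range_succ']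
      have hterm0 : f 0 ^ q = (2 * π) ^ (q/2) := by
        rw [hfj 0]
        have : max ((0:ℕ) : ℝ) c = c := by
          rw [Nat.cast_zero]; exact max_eq_right hc0.le
        rw [this, hc_def, one_div, Real.inv_rpow (by positivity),
          ← Real.rpow_neg (by positivity), neg_neg]
      have hsumm : Summable fun j : ℕ => ((j : ℝ) + 1) ^ (-(q/2)) := by
        have hs := Real.summable_nat_rpow.mpr (show -(q/2) < -1 by linarith)
        have := hs.comp_injective (add_left_injective 1)
        refine this.congr fun j => ?_
        simp [Nat.cast_add]
      have htail : ∑ j ∈ Finset.range N, f (j + 1) ^ q ≤ zetaReal (q/2) := by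
        have e3 : ∀ j : ℕ, f (j + 1) ^ q = ((j : ℝ) + 1) ^ (-(q/2)) := by
          intro j
          rw [hfj (j + 1)]
          have hm : max (((j + 1 : ℕ)) : ℝ) c = (j : ℝ) + 1 := by
            push_cast
            exact max_eq_left (by nlinarith [Nat.cast_nonneg (α := ℝ) j])
          rw [hm]
        calc ∑ j ∈ Finset.range N, f (j + 1) ^ q
            = ∑ j ∈ Finset.range N, ((j : ℝ) + 1) ^ (-(q/2)) :=
              Finset.sum_congr rfl fun j _ => e3 j
          _ ≤ zetaReal (q/2) :=
              Summable.sum_le_tsum _ (fun j _ => Real.rpow_nonneg (by positivity) _) hsumm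
      rw [hZ_def, hterm0]
      linarith
    calc ∑ u ∈ S, (∏ i, f (u i)) ^ q
        = ∑ u ∈ S, ∏ i, f (u i) ^ q := Finset.sum_congr rfl fun u _ => hfq u
      _ ≤ (∑ j ∈ Finset.range (N + 1), f j ^ q) ^ n := hgb
      _ ≤ Z ^ n := pow_le_pow_left₀ hT0 hTZ n
  -- combine
  have hA : ((S.card : ℝ)) ^ (1/p) ≤ Real.exp ((n / p) * Psi r) := by
    calc ((S.card : ℝ)) ^ (1/p)
        ≤ (Real.exp ((n : ℝ) * Psi r)) ^ (1/p) :=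
          Real.rpow_le_rpow (Nat.cast_nonneg _) hcard' (by positivity)
      _ = Real.exp ((n / p) * Psi r) := by
          rw [← Real.exp_mul]
          congr 1
          ring
  have hB : (∑ u ∈ S, (∏ i, f (u i)) ^ q) ^ (1/q) ≤ Z ^ ((n : ℝ)/q) := by
    have hsum0 : 0 ≤ ∑ u ∈ S, (∏ i, f (u i)) ^ q :=
      Finset.sum_nonneg fun u _ => Real.rpow_nonneg
        (Finset.prod_nonneg fun i _ => (hfpos _).le) q
    calc (∑ u ∈ S, (∏ i, f (u i)) ^ q) ^ (1/q)
        ≤ (Z ^ n) ^ (1/q) := Real.rpow_le_rpow hsum0 hmom (by positivity)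
      _ = Z ^ ((n : ℝ)/q) := by
          rw [← Real.rpow_natCast Z n, ← Real.rpow_mul hZ0, mul_one_div]
  have hsum1 : (∑ u ∈ S, (1:ℝ)) ^ (1/p) = ((S.card : ℝ)) ^ (1/p) := by
    rw [Finset.sum_const, nsmul_eq_mul, mul_one]
  calc ∑ u ∈ S, ∏ i, (max (u i : ℝ) c) ^ (-(1:ℝ)/2)
      = ∑ u ∈ S, ∏ i, f (u i) := rfl
    _ ≤ (∑ u ∈ S, (1:ℝ)) ^ (1/p) * (∑ u ∈ S, (∏ i, f (u i)) ^ q) ^ (1/q) := holder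
    _ ≤ Real.exp ((n / p) * Psi r) * Z ^ ((n : ℝ)/q) := by
        refine mul_le_mul (hsum1 ▸ hA) hB (Real.rpow_nonneg ?_ _) (Real.exp_pos _).le
        exact Finset.sum_nonneg fun u _ => Real.rpow_nonneg
          (Finset.prod_nonneg fun i _ => (hfpos _).le) q
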